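/- Gordan's lemma: let S ⊆ ℕ^r be a finitely generated submonoid and let C ⊆ ℝ^r be a rational polyhedral cone. Then the monoid S ∩ C = {s ∈ S : s ∈ C} is finitely generated. -/

import Mathlib

open Finset in
/-- Elements expressible as ℕ-combinations of `g` form a submonoid. -/
def combos {M : Type*} [AddCommMonoid M] {p : ℕ} (g : Fin p → M) : AddSubmonoid M where
  carrier := {s | ∃ x : Fin p → ℕ, s = ∑ i, x i • g i}
  zero_mem' := ⟨0, by simp⟩
  add_mem' := by
    rintro a b ⟨x, rfl⟩ ⟨y, rfl⟩
    exact ⟨x + y, by simp [add_smul, Finset.sum_add_distrib]⟩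

lemma closure_range_eq {M : Type*} [AddCommMonoid M] {p : ℕ} (g : Fin p → M) :
    AddSubmonoid.closure (Set.range g) = combos g := by
  apply le_antisymm
  · rw [AddSubmonoid.closure_le]
    rintro - ⟨i, rfl⟩
    exact ⟨Pi.single i 1, by simp [Pi.single_apply, ite_smul]⟩
  · rintro s ⟨x, rfl⟩
    exact AddSubmonoid.sum_mem _ fun i _ =>
      AddSubmonoid.nsmul_mem _ (AddSubmonoid.subset_closure (Set.mem_range_self i)) _

/-- The solution submonoid of an integer-linear system over ℕ^m. -/
lemma pi_nat_isPWO {m : ℕ} (s : Set (Fin m → ℕ)) : s.IsPWO :=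
  Set.isPWO_of_wellQuasiOrderedLE s

def solMonoid (m n : ℕ) (W : Fin m → Fin n → ℤ) : AddSubmonoid (Fin m → ℕ) where
  carrier := {x | ∑ i, (x i : ℤ) • W i = 0}
  zero_mem' := Finset.sum_eq_zero fun i _ => by simp
  add_mem' := by
    intro a b ha hb
    have : ∑ i, ((a + b) i : ℤ) • W i
        = (∑ i, (a i : ℤ) • W i) + ∑ i, (b i : ℤ) • W i := by
      rw [← Finset.sum_add_distrib]
      refine Finset.sum_congr rfl fun i _ => ?_
      push_cast [Pi.add_apply]
      rw [add_smul]
    simp only [Set.mem_setOf_eq] at ha hb ⊢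
    rw [this, ha, hb, add_zero]

lemma solMonoid_sub {m n : ℕ} {W : Fin m → Fin n → ℤ} {a b : Fin m → ℕ}
    (ha : a ∈ solMonoid m n W) (hb : b ∈ solMonoid m n W) (hab : a ≤ b) :
    b - a ∈ solMonoid m n W := by
  have : ∑ i, ((b - a) i : ℤ) • W i
      = (∑ i, (b i : ℤ) • W i) - ∑ i, (a i : ℤ) • W i := by
    rw [← Finset.sum_sub_distrib]
    refine Finset.sum_congr rfl fun i _ => ?_
    rw [Pi.sub_apply, Nat.cast_sub (hab i), sub_smul]
  simp only [solMonoid, AddSubmonoid.mem_mk, AddSubsemigroup.mem_mk, Set.mem_setOf_eq] at ha hb ⊢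
  rw [this, ha, hb, sub_zero]

lemma dickson_fg (m n : ℕ) (W : Fin m → Fin n → ℤ) : (solMonoid m n W).FG := by
  classical
  set M := solMonoid m n W
  set A : Set (Fin m → ℕ) := {y | y ∈ M ∧ y ≠ 0 ∧ ∀ z ∈ M, z ≠ 0 → ¬ z < y} with hA
  have hAfin : A.Finite := by
    refine IsAntichain.finite_of_partiallyWellOrderedOn (r := (· ≤ ·)) ?_ (pi_nat_isPWO A)
    intro a ha b hb hne hle
    exact hb.2.2 a ha.1 ha.2.1 (lt_of_le_of_ne hle hne)
  rw [AddSubmonoid.fg_iff]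
  refine ⟨A, ?_, hAfin⟩
  apply le_antisymm
  · rw [AddSubmonoid.closure_le]; exact fun y hy => hy.1
  · intro x hx
    suffices H : ∀ (N : ℕ) (x : Fin m → ℕ), (∑ i, x i) ≤ N → x ∈ M →
        x ∈ AddSubmonoid.closure A from H (∑ i, x i) x le_rfl hx
    clear hx x
    intro N
    induction N with
    | zero =>
      intro x hxN _
      have : x = 0 := by
        funext i
        exact Nat.eq_zero_of_le_zero (le_trans (Finset.single_le_sum (f := x)
          (fun j _ => Nat.zero_le _) (Finset.mem_univ i)) hxN)
      rw [this]; exact zero_mem _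
    | succ N ih =>
      intro x hxN hx
      by_cases hx0 : x = 0
      · rw [hx0]; exact zero_mem _
      · set B : Set (Fin m → ℕ) := {y | y ∈ M ∧ y ≠ 0 ∧ y ≤ x} with hB
        have hBne : B.Nonempty := ⟨x, hx, hx0, le_rfl⟩
        have hBwf : B.IsWF := (pi_nat_isPWO B).isWF
        set a := hBwf.min hBne with ha
        have haB : a ∈ B := hBwf.min_mem hBne
        have haA : a ∈ A := by
          refine ⟨haB.1, haB.2.1, fun z hz hz0 hlt => ?_⟩
          exact hBwf.not_lt_min hBne ⟨hz, hz0, le_trans hlt.le haB.2.2⟩ hlt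
        have hax : a ≤ x := haB.2.2
        have hsum : (∑ i, (x - a) i) + (∑ i, a i) = ∑ i, x i := by
          rw [← Finset.sum_add_distrib]
          exact Finset.sum_congr rfl fun i _ => Nat.sub_add_cancel (hax i)
        have hapos : 0 < ∑ i, a i := by
          rcases Function.ne_iff.1 haB.2.1 with ⟨i, hi⟩
          exact lt_of_lt_of_le (Nat.pos_of_ne_zero hi)
            (Finset.single_le_sum (fun j _ => Nat.zero_le _) (Finset.mem_univ i))
        have hle : (∑ i, (x - a) i) ≤ N := by omega
        have hxa : x - a ∈ M := solMonoid_sub haB.1 hx hax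
        have : x = (x - a) + a := by
          funext i
          exact (Nat.sub_add_cancel (hax i)).symm
        rw [this]
        exact add_mem (ih _ hle hxa) (AddSubmonoid.subset_closure haA)

lemma cone_int_fg (r k : ℕ) (w : Fin k → Fin r → ℤ) :
    ∃ F : Finset (Fin r → ℤ), ∀ s : Fin r → ℤ,
      ((∃ c : Fin k → ℝ, (∀ i, 0 ≤ c i) ∧
          (fun j => (s j : ℝ)) = ∑ i, c i • fun j => ((w i j : ℝ)))
        ↔ s ∈ AddSubmonoid.closure (F : Set (Fin r → ℤ))) := by
  classical
  set Fset : Set (Fin r → ℤ) := {s | ∃ t : Fin k → ℝ, (∀ i, 0 ≤ t i ∧ t i ≤ 1) ∧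
    (fun j => (s j : ℝ)) = ∑ i, t i • fun j => ((w i j : ℝ))} with hFset
  -- finiteness of Fset
  have hbound : ∀ s ∈ Fset, s ∈ Set.Icc (fun j => -∑ i, |w i j|) (fun j => ∑ i, |w i j|) := by
    rintro s ⟨t, ht, hs⟩
    have key : ∀ j, |s j| ≤ ∑ i, |w i j| := by
      intro j
      have hsj : (s j : ℝ) = ∑ i, t i * (w i j : ℝ) := by
        have := congrFun hs j
        simpa [Finset.sum_apply] using this
      have : |(s j : ℝ)| ≤ ∑ i, |(w i j : ℝ)| := by
        rw [hsj]
        refine le_trans (Finset.abs_sum_le_sum_abs _ _) ?_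
        refine Finset.sum_le_sum fun i _ => ?_
        rw [abs_mul]
        calc |t i| * |(w i j : ℝ)| ≤ 1 * |(w i j : ℝ)| := by
              refine mul_le_mul_of_nonneg_right ?_ (abs_nonneg _)
              rw [abs_of_nonneg (ht i).1]; exact (ht i).2
          _ = |(w i j : ℝ)| := one_mul _
      have h2 : |(s j : ℝ)| = ((|s j| : ℤ) : ℝ) := by push_cast; ring
      rw [h2] at this
      have h3 : (((∑ i, |w i j| : ℤ)) : ℝ) = ∑ i, |(w i j : ℝ)| := by push_cast; ring
      rw [← h3] at this
      exact_mod_cast this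
    constructor
    · intro j; simpa using (abs_le.1 (key j)).1
    · intro j; exact (abs_le.1 (key j)).2
  have hFfin : Fset.Finite := (Set.finite_Icc _ _).subset hbound
  refine ⟨hFfin.toFinset, fun s => ?_⟩
  rw [Set.Finite.coe_toFinset]
  have hw_mem : ∀ i, w i ∈ Fset := by
    intro i
    refine ⟨fun l => if l = i then 1 else 0, fun l => by dsimp only; split <;> norm_num, ?_⟩
    funext j
    rw [Finset.sum_apply]
    simp only [Pi.smul_apply, smul_eq_mul, ite_mul, one_mul, zero_mul]
    rw [Finset.sum_ite_eq' Finset.univ i (fun l => ((w l j : ℝ)))]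
    simp
  constructor
  · rintro ⟨c, hc, hs⟩
    set n : Fin k → ℕ := fun i => ⌊c i⌋₊ with hn
    set d : Fin r → ℤ := fun j => s j - ∑ i, (n i : ℤ) * w i j with hd
    have hsj : ∀ j, (s j : ℝ) = ∑ i, c i * (w i j : ℝ) := by
      intro j
      simpa [Finset.sum_apply] using congrFun hs j
    have hdF : d ∈ Fset := by
      refine ⟨fun i => c i - n i, fun i => ⟨by
        simpa using Nat.floor_le (hc i), ?_⟩, ?_⟩
      · have := Nat.lt_floor_add_one (c i)
        simp only [hn]
        linarith
      · funext j
        have : (d j : ℝ) = (s j : ℝ) - ∑ i, (n i : ℝ) * (w i j : ℝ) := by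
          simp only [hd]; push_cast; ring
        rw [Finset.sum_apply]
        simp only [Pi.smul_apply, smul_eq_mul]
        rw [this, hsj j, ← Finset.sum_sub_distrib]
        exact Finset.sum_congr rfl fun i _ => by ring
    have hrepr : s = (∑ i, n i • w i) + d := by
      funext j
      simp only [Pi.add_apply, Finset.sum_apply, Pi.smul_apply, smul_eq_mul, hd,
        nsmul_eq_mul, Pi.mul_apply, Pi.natCast_apply]
      ring
    rw [hrepr]
    exact add_mem (AddSubmonoid.sum_mem _ fun i _ =>
        AddSubmonoid.nsmul_mem _ (AddSubmonoid.subset_closure (hw_mem i)) _)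
      (AddSubmonoid.subset_closure hdF)
  · intro hs
    induction hs using AddSubmonoid.closure_induction with
    | mem a ha =>
      obtain ⟨t, ht, hta⟩ := ha
      exact ⟨t, fun i => (ht i).1, hta⟩
    | zero => exact ⟨0, fun i => le_refl 0, by funext j; simp⟩
    | add a b ha hb iha ihb =>
      obtain ⟨c1, hc1, h1⟩ := iha
      obtain ⟨c2, hc2, h2⟩ := ihb
      refine ⟨c1 + c2, fun i => add_nonneg (hc1 i) (hc2 i), ?_⟩
      funext j
      have e1 := congrFun h1 j
      have e2 := congrFun h2 j
      simp only [Finset.sum_apply, Pi.smul_apply, smul_eq_mul, Pi.add_apply] at e1 e2 ⊢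
      push_cast
      rw [e1, e2, ← Finset.sum_add_distrib]
      exact Finset.sum_congr rfl fun i _ => by ring

/-- **Gordan's lemma.** Let `S ⊆ ℕʳ` be a finitely generated submonoid and let `C ⊆ ℝʳ`
be a rational polyhedral cone (generated by finitely many rational vectors `v i`). Then
`{s ∈ S : s ∈ C}` is a finitely generated submonoid of `ℕʳ`. -/
theorem gordan_lemma
    (r : ℕ) (S : AddSubmonoid (Fin r → ℕ)) (hS : S.FG)
    (k : ℕ) (v : Fin k → Fin r → ℚ)
    (C : Set (Fin r → ℝ))
    (hC : C = {x | ∃ c : Fin k → ℝ, (∀ i, 0 ≤ c i) ∧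
      x = ∑ i, c i • fun j => ((v i j : ℝ))}) :
    ∃ T : AddSubmonoid (Fin r → ℕ),
      (T : Set (Fin r → ℕ)) = {s | s ∈ S ∧ (fun j => ((s j : ℝ))) ∈ C} ∧ T.FG := by
  classical
  obtain ⟨GS, hGS⟩ := hS
  set p := GS.card with hp
  set g : Fin p → (Fin r → ℕ) := fun i => (GS.equivFin.symm i : Fin r → ℕ) with hg
  have hrange_g : Set.range g = (GS : Set (Fin r → ℕ)) := by
    ext a
    constructor
    · rintro ⟨i, rfl⟩; exact (GS.equivFin.symm i).2
    · intro ha; exact ⟨GS.equivFin ⟨a, ha⟩, by simp [hg]⟩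
  have hS' : (S : Set (Fin r → ℕ)) = {s | ∃ x : Fin p → ℕ, s = ∑ a, x a • g a} := by
    rw [← hGS, ← hrange_g, closure_range_eq]; rfl
  -- clear denominators
  set N : ℕ := ∏ i : Fin k, ∏ j : Fin r, (v i j).den with hNdef
  have hN : 0 < N :=
    Finset.prod_pos fun i _ => Finset.prod_pos fun j _ => (v i j).pos
  set w : Fin k → Fin r → ℤ := fun i j => (v i j).num * ((N / (v i j).den : ℕ) : ℤ) with hw
  have hkey : ∀ i j, ((w i j : ℚ)) = (N : ℚ) * v i j := by
    intro i j
    have hdvd : (v i j).den ∣ N := by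
      refine dvd_trans (Finset.dvd_prod_of_mem (fun j' => (v i j').den) (Finset.mem_univ j)) ?_
      exact Finset.dvd_prod_of_mem (fun i' => ∏ j', (v i' j').den) (Finset.mem_univ i)
    obtain ⟨t, ht⟩ := hdvd
    have hdivt : N / (v i j).den = t := by rw [ht]; exact Nat.mul_div_cancel_left _ (v i j).pos
    have hNt : (N : ℚ) = ((v i j).den : ℚ) * t := by exact_mod_cast congrArg Nat.cast ht
    have hden0 : (((v i j).den : ℚ)) ≠ 0 := by
      exact_mod_cast (v i j).den_ne_zero
    have hnum : ((v i j).num : ℚ) = v i j * ((v i j).den : ℚ) := by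
      have h := Rat.num_div_den (v i j)
      rw [div_eq_iff hden0] at h
      rw [h]
    show (((v i j).num * ((N / (v i j).den : ℕ) : ℤ) : ℤ) : ℚ) = (N : ℚ) * v i j
    rw [hdivt]
    push_cast
    rw [hnum, hNt]
    ring
  have hwr : ∀ i, (fun j => ((w i j : ℤ) : ℝ)) = fun j => (N : ℝ) * ((v i j : ℚ) : ℝ) := by
    intro i; funext j
    have := hkey i j
    have : (((w i j : ℚ)) : ℝ) = (((N : ℚ) * v i j : ℚ) : ℝ) := by rw [this]
    push_cast at this ⊢
    exact this
  have hCw : ∀ x : Fin r → ℝ, x ∈ C ↔ ∃ c : Fin k → ℝ, (∀ i, 0 ≤ c i) ∧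
      x = ∑ i, c i • fun j => ((w i j : ℝ)) := by
    intro x
    rw [hC]
    constructor
    · rintro ⟨c, hc, rfl⟩
      refine ⟨fun i => c i / N, fun i => div_nonneg (hc i) (Nat.cast_nonneg N), ?_⟩
      refine Finset.sum_congr rfl fun i _ => ?_
      rw [hwr i]
      funext j
      have hN0 : (N : ℝ) ≠ 0 := by positivity
      simp only [Pi.smul_apply, smul_eq_mul]
      field_simp
    · rintro ⟨c, hc, rfl⟩
      refine ⟨fun i => c i * N, fun i => mul_nonneg (hc i) (Nat.cast_nonneg N), ?_⟩
      refine Finset.sum_congr rfl fun i _ => ?_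
      rw [hwr i]
      funext j
      simp only [Pi.smul_apply, smul_eq_mul]
      ring
  -- the finite generating set of the integer cone
  obtain ⟨F, hF⟩ := cone_int_fg r k w
  set q' := F.card with hq'
  set u : Fin q' → (Fin r → ℤ) := fun b => (F.equivFin.symm b : Fin r → ℤ) with hu
  have hrange_u : Set.range u = (F : Set (Fin r → ℤ)) := by
    ext a
    constructor
    · rintro ⟨b, rfl⟩; exact (F.equivFin.symm b).2
    · intro ha; exact ⟨F.equivFin ⟨a, ha⟩, by simp [hu]⟩
  have hclosF : (AddSubmonoid.closure (F : Set (Fin r → ℤ)) : Set (Fin r → ℤ))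
      = {s | ∃ y : Fin q' → ℕ, s = ∑ b, y b • u b} := by
    rw [← hrange_u, closure_range_eq]; rfl
  -- the big system
  set W : Fin (p + q') → Fin r → ℤ :=
    Fin.addCases (fun a => fun j => (g a j : ℤ)) (fun b => -(u b)) with hW
  set ψ : (Fin (p + q') → ℕ) →+ (Fin r → ℕ) :=
    { toFun := fun z => ∑ a : Fin p, z (Fin.castAdd q' a) • g a
      map_zero' := by simp
      map_add' := fun z z' => by
        show ∑ a : Fin p, (z + z') (Fin.castAdd q' a) • g a = _
        rw [← Finset.sum_add_distrib]
        exact Finset.sum_congr rfl fun a _ => by simp [add_smul] } with hψ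
  have hmemT' : ∀ z : Fin (p + q') → ℕ, z ∈ solMonoid (p + q') r W ↔
      ∑ a : Fin p, ((z (Fin.castAdd q' a) : ℤ)) • (fun j => (g a j : ℤ))
        = ∑ b : Fin q', ((z (Fin.natAdd p b) : ℤ)) • u b := by
    intro z
    show (∑ i, (z i : ℤ) • W i = 0) ↔ _
    rw [Fin.sum_univ_add (f := fun i => (z i : ℤ) • W i)]
    have h1 : ∀ a : Fin p, W (Fin.castAdd q' a) = fun j => (g a j : ℤ) := fun a => by
      rw [hW]; exact Fin.addCases_left a
    have h2 : ∀ b : Fin q', W (Fin.natAdd p b) = -(u b) := fun b => by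
      rw [hW]; exact Fin.addCases_right b
    simp_rw [h1, h2, smul_neg]
    rw [Finset.sum_neg_distrib]
    rw [add_neg_eq_zero]
  -- casting lemma
  have hcast : ∀ (x : Fin p → ℕ),
      (fun j => (((∑ a, x a • g a : Fin r → ℕ)) j : ℤ)) = ∑ a, (x a : ℤ) • fun j => (g a j : ℤ) := by
    intro x
    funext j
    simp only [Finset.sum_apply, Pi.smul_apply, smul_eq_mul, nsmul_eq_mul,
      Pi.mul_apply, Pi.natCast_apply]
    push_cast
    ring
  refine ⟨(solMonoid (p + q') r W).map ψ, ?_, (dickson_fg _ _ W).map ψ⟩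
  rw [AddSubmonoid.coe_map]
  ext s
  simp only [Set.mem_image, SetLike.mem_coe, Set.mem_setOf_eq]
  constructor
  · rintro ⟨z, hz, rfl⟩
    rw [hmemT'] at hz
    have hψz : ψ z = ∑ a, z (Fin.castAdd q' a) • g a := rfl
    constructor
    · have : ψ z ∈ (S : Set (Fin r → ℕ)) := by
        rw [hS']; exact ⟨fun a => z (Fin.castAdd q' a), hψz⟩
      exact this
    · rw [hCw]
      have hzint : (fun j => ((ψ z) j : ℤ)) = ∑ b, ((z (Fin.natAdd p b) : ℤ)) • u b := by
        rw [hψz, hcast, hz]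
      have hmem : (fun j => ((ψ z) j : ℤ)) ∈ AddSubmonoid.closure (F : Set (Fin r → ℤ)) := by
        rw [hzint]
        exact AddSubmonoid.sum_mem _ fun b _ => by
          rw [natCast_zsmul]
          exact AddSubmonoid.nsmul_mem _
            (AddSubmonoid.subset_closure (by rw [← hrange_u]; exact ⟨b, rfl⟩)) _
      obtain ⟨c, hc, hrepr⟩ := (hF (fun j => ((ψ z) j : ℤ))).2 hmem
      refine ⟨c, hc, ?_⟩
      rw [← hrepr]
      funext j
      push_cast
      ring
  · rintro ⟨hsS, hsC⟩
    rw [← SetLike.mem_coe, hS'] at hsS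
    obtain ⟨x, hx⟩ := hsS
    rw [hCw] at hsC
    obtain ⟨c, hc, hrepr⟩ := hsC
    have hFs : (fun j => (s j : ℤ)) ∈ AddSubmonoid.closure (F : Set (Fin r → ℤ)) := by
      refine (hF (fun j => (s j : ℤ))).1 ⟨c, hc, ?_⟩
      rw [← hrepr]
      funext j
      push_cast
      ring
    rw [← SetLike.mem_coe, hclosF] at hFs
    obtain ⟨y, hy⟩ := hFs
    set z : Fin (p + q') → ℕ := Fin.addCases (motive := fun _ => ℕ) x y with hzdef
    have hzx : ∀ a, z (Fin.castAdd q' a) = x a := fun a => by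
      rw [hzdef]; exact Fin.addCases_left a
    have hzy : ∀ b, z (Fin.natAdd p b) = y b := fun b => by
      rw [hzdef]; exact Fin.addCases_right b
    refine ⟨z, ?_, ?_⟩
    · rw [hmemT']
      simp_rw [hzx, hzy]
      have h1 : ∑ a, ((x a : ℤ)) • (fun j => (g a j : ℤ)) = fun j => (s j : ℤ) := by
        rw [← hcast, ← hx]
      have h2 : ∑ b, ((y b : ℤ)) • u b = fun j => (s j : ℤ) := by
        simp_rw [natCast_zsmul]
        rw [← hy]
      rw [h1, h2]
    · show ∑ a, z (Fin.castAdd q' a) • g a = s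
      simp_rw [hzx]
      exact hx.symm
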